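/- If X ⊆ 2^ω is perfectly null in the transitive sense and Y ⊆ 2^ω is an SR^N set, then X + Y is perfectly null. -/

import Mathlib

open MeasureTheory Set Pointwise

/-- The Cantor space `2^ω`, a compact topological group under coordinatewise
addition mod 2. -/
abbrev CS := ℕ → ZMod 2

/-- The basic clopen set `[w]` determined by a finite binary sequence `w`:
all `x ∈ 2^ω` extending `w`. -/
def cyl (w : List (ZMod 2)) : Set CS := {x | ∀ i, i < w.length → x i = w.getD i 0}

/-- `w` is a branching node of `P`: both `[w⌢0] ∩ P` and `[w⌢1] ∩ P` are nonempty. -/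
def Branch (P : Set CS) (w : List (ZMod 2)) : Prop :=
  (cyl (w ++ [0]) ∩ P).Nonempty ∧ (cyl (w ++ [1]) ∩ P).Nonempty

/-- A perfect subset of Cantor space: nonempty, closed, with no isolated points. -/
def PerfSet (P : Set CS) : Prop := Perfect P ∧ P.Nonempty

/-- `ν` is a canonical measure of the perfect set `P`: a Borel probability measure with
`ν P = 1` and `ν [w⌢0] = ν [w⌢1]` for every branching node `w` of `P`. -/
def IsCanonical (P : Set CS) (ν : Measure CS) : Prop :=
  IsProbabilityMeasure ν ∧ ν P = 1 ∧
    ∀ w : List (ZMod 2), Branch P w → ν (cyl (w ++ [0])) = ν (cyl (w ++ [1]))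

/-- `A` is `P`-null: the `μ_P`-outer measure of `A ∩ P` is `0`
(quantified over all canonical measures of `P`). -/
def PNull (P A : Set CS) : Prop := ∀ ν : Measure CS, IsCanonical P ν → ν (A ∩ P) = 0

/-- `A` is `P`-measurable: `A ∩ P` differs from a Borel set by a `P`-null set,
i.e. it is null-measurable with respect to the canonical measure of `P`. -/
def PMeasurable (P A : Set CS) : Prop :=
  ∀ ν : Measure CS, IsCanonical P ν → NullMeasurableSet (A ∩ P) ν

/-- `X` is perfectly null: `P`-null for every perfect set `P`. -/
def PerfectlyNull (X : Set CS) : Prop := ∀ P, PerfSet P → PNull P X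

/-- `μ` is the fair-coin (Lebesgue product) measure on `2^ω`:
a Borel probability measure with `μ [w] = 2^{-|w|}` for every finite binary sequence. -/
def IsFairCoin (μ : Measure CS) : Prop :=
  IsProbabilityMeasure μ ∧ ∀ w : List (ZMod 2), μ (cyl w) = (2 : ENNReal)⁻¹ ^ w.length

/-- The number of branching nodes of `P` that are proper initial segments of `v`. -/
noncomputable def brCount (P : Set CS) (v : List (ZMod 2)) : ℕ :=
  Set.ncard {u : List (ZMod 2) | u <+: v ∧ u ≠ v ∧ Branch P u}

/-- A balanced perfect set: branching nodes of strictly smaller level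
are strictly shorter. -/
def BalancedPerf (P : Set CS) : Prop :=
  PerfSet P ∧ ∀ v w : List (ZMod 2), Branch P v → Branch P w →
    brCount P v < brCount P w → v.length < w.length

/-- A uniformly perfect set: on each length, either all nodes meeting `P` branch,
or none does. -/
def UniformlyPerf (P : Set CS) : Prop :=
  PerfSet P ∧ ∀ n : ℕ,
    (∀ w : List (ZMod 2), w.length = n → (cyl w ∩ P).Nonempty → Branch P w) ∨
    (∀ w : List (ZMod 2), w.length = n → ¬ Branch P w)

/-- A Silver perfect set: determined by a partial function `ℕ ⇀ 2`
whose domain has infinite complement. -/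
def SilverPerf (P : Set CS) : Prop :=
  ∃ f : ℕ → Option (ZMod 2), {n | f n = none}.Infinite ∧
    P = {x | ∀ n b, f n = some b → x n = b}

/-- A Marczewski null (`s₀`) set. -/
def S0Set (X : Set CS) : Prop :=
  ∀ P, PerfSet P → ∃ Q, PerfSet Q ∧ Q ⊆ P ∧ Q ∩ X = ∅

/-- `S` is a Sierpiński set with respect to the measure `μ`: uncountable, with
countable intersection with every `μ`-null set. -/
def Sierpinski (μ : Measure CS) (S : Set CS) : Prop :=
  ¬ S.Countable ∧ ∀ N : Set CS, μ N = 0 → (S ∩ N).Countable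

/-- The interleaving homeomorphism `h : 2^ω × 2^ω → 2^ω`,
`h(x,y) = ⟨x 0, y 0, x 1, y 1, …⟩`. -/
def interleave (p : CS × CS) : CS := fun n => if n % 2 = 0 then p.1 (n / 2) else p.2 (n / 2)

/-- `X` is universally null: outer measure zero with respect to every finite diffused
Borel measure on `2^ω`. -/
def UniversallyNull (X : Set CS) : Prop :=
  ∀ μ : Measure CS, IsFiniteMeasure μ → (∀ x : CS, μ {x} = 0) → μ X = 0

/-- `X` is strongly null: for every sequence of positive `ε n` there are sets `A n` of
diameter `< ε n` (with respect to the standard metric `d(x,y) = 2^{-min{n : x n ≠ y n}}`,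
expressed combinatorially) covering `X`. -/
def StronglyNull (X : Set CS) : Prop :=
  ∀ ε : ℕ → ℝ, (∀ n, 0 < ε n) → ∃ A : ℕ → Set CS,
    (∀ n, ∃ N : ℕ, (2 : ℝ)⁻¹ ^ N < ε n ∧ ∀ x ∈ A n, ∀ y ∈ A n, ∀ i < N, x i = y i) ∧
    X ⊆ ⋃ n, A n

/-- `X` is perfectly null in the transitive sense: for every perfect `P` there is a
`G_δ` set `G ⊇ X` with `(G + t) ∩ P` being `P`-null for every `t`. -/
def PNPrime (X : Set CS) : Prop :=
  ∀ P, PerfSet P → ∃ G : Set CS, IsGδ G ∧ X ⊆ G ∧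
    ∀ t : CS, PNull P ((fun g => g + t) '' G)

/-- `Y` is an `SR^N` set with respect to the measure `m`: for every Borel
`H ⊆ 2^ω × 2^ω` with all vertical sections `m`-null, `⋃_{x ∈ Y} H_x` is `m`-null. -/
def SRN (m : Measure CS) (Y : Set CS) : Prop :=
  ∀ H : Set (CS × CS), MeasurableSet H → (∀ x : CS, m {y | (x, y) ∈ H} = 0) →
    m (⋃ x ∈ Y, {y | (x, y) ∈ H}) = 0





lemma mem_cyl {w : List (ZMod 2)} {x : CS} : x ∈ cyl w ↔ ∀ i, i < w.length → x i = w.getD i 0 :=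
  Iff.rfl

lemma cyl_nil : cyl ([] : List (ZMod 2)) = univ := by
  ext x; simp [cyl]

lemma cyl_anti {v w : List (ZMod 2)} (h : v <+: w) : cyl w ⊆ cyl v := by
  intro x hx i hi
  have hlen : v.length ≤ w.length := h.length_le
  have := hx i (lt_of_lt_of_le hi hlen)
  rw [this]
  obtain ⟨t, rfl⟩ := h
  rw [List.getD_append _ _ _ _ hi]

lemma isOpen_cyl (w : List (ZMod 2)) : IsOpen (cyl w) := by
  have : cyl w = ⋂ i ∈ Finset.range w.length, (fun x : CS => x i) ⁻¹' {w.getD i 0} := by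
    ext x; simp [cyl, mem_iInter]
  rw [this]
  exact isOpen_biInter_finset fun i _ =>
    (continuous_apply i).isOpen_preimage _ (isOpen_discrete _)

lemma isClosed_cyl (w : List (ZMod 2)) : IsClosed (cyl w) := by
  have : cyl w = ⋂ i ∈ Finset.range w.length, (fun x : CS => x i) ⁻¹' {w.getD i 0} := by
    ext x; simp [cyl, mem_iInter]
  rw [this]
  exact isClosed_biInter fun i _ =>
    IsClosed.preimage (continuous_apply i) (isClosed_discrete _)

lemma measurableSet_cyl (w : List (ZMod 2)) : MeasurableSet (cyl w) :=
  (isOpen_cyl w).measurableSet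

lemma mem_cyl_append {w : List (ZMod 2)} {b : ZMod 2} {x : CS} :
    x ∈ cyl (w ++ [b]) ↔ x ∈ cyl w ∧ x w.length = b := by
  constructor
  · intro h
    refine ⟨cyl_anti ⟨[b], rfl⟩ h, ?_⟩
    have := h w.length (by simp)
    rwa [List.getD_append_right _ _ _ _ le_rfl, Nat.sub_self] at this
  · rintro ⟨h1, h2⟩ i hi
    simp only [List.length_append, List.length_singleton] at hi
    rcases lt_or_eq_of_le (Nat.lt_succ_iff.mp hi) with h | h
    · rw [List.getD_append _ _ _ _ h]; exact h1 i h
    · subst h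
      rw [List.getD_append_right _ _ _ _ le_rfl, Nat.sub_self]
      exact h2

lemma zmod2_cases (a : ZMod 2) : a = 0 ∨ a = 1 := by revert a; decide

lemma cyl_eq_union (w : List (ZMod 2)) : cyl w = cyl (w ++ [0]) ∪ cyl (w ++ [1]) := by
  ext x
  simp only [mem_union, mem_cyl_append]
  constructor
  · intro h
    rcases zmod2_cases (x w.length) with h0 | h1
    · exact Or.inl ⟨h, h0⟩
    · exact Or.inr ⟨h, h1⟩
  · rintro (⟨h, _⟩ | ⟨h, _⟩) <;> exact h




lemma mem_cyl_ofFn {n : ℕ} {t : Fin n → ZMod 2} {x : CS} :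
    x ∈ cyl (List.ofFn t) ↔ ∀ i : Fin n, x i = t i := by
  constructor
  · intro h i
    have := h i (by simp [i.isLt])
    rwa [List.getD_eq_getElem _ _ (by simp [i.isLt]), List.getElem_ofFn] at this
  · intro h i hi
    simp only [List.length_ofFn] at hi
    rw [List.getD_eq_getElem _ _ (by simp [hi]), List.getElem_ofFn]
    exact h ⟨i, hi⟩

lemma cyl_ofFn_disjoint {n : ℕ} {t t' : Fin n → ZMod 2} (h : t ≠ t') :
    Disjoint (cyl (List.ofFn t)) (cyl (List.ofFn t')) := by
  rw [Set.disjoint_left]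
  intro x hx hx'
  exact h (funext fun i => ((mem_cyl_ofFn.mp hx i).symm.trans (mem_cyl_ofFn.mp hx' i)))

lemma iUnion_cyl_ofFn (n : ℕ) : ⋃ t : Fin n → ZMod 2, cyl (List.ofFn t) = univ := by
  refine eq_univ_of_forall fun x => ?_
  exact mem_iUnion.mpr ⟨fun i => x i, mem_cyl_ofFn.mpr fun i => rfl⟩

lemma z2 (a b c : ZMod 2) : a + b + c = b ↔ c = a := by revert a b c; decide

noncomputable def fairCoin : Measure CS :=
  Measure.addHaarMeasure ⟨⟨univ, isCompact_univ⟩, by simp⟩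

lemma fairCoin_univ : fairCoin univ = 1 := by
  simpa [fairCoin] using Measure.addHaarMeasure_self (K₀ := (⟨⟨univ, isCompact_univ⟩, by simp⟩ :
    TopologicalSpace.PositiveCompacts CS))

instance : IsProbabilityMeasure fairCoin := ⟨fairCoin_univ⟩

instance : fairCoin.IsAddLeftInvariant := by unfold fairCoin; infer_instance

lemma fairCoin_cyl_eq {v w : List (ZMod 2)} (h : v.length = w.length) :
    fairCoin (cyl v) = fairCoin (cyl w) := by
  set c : CS := fun i => v.getD i 0 + w.getD i 0 with hc
  have key : cyl v = (fun x => c + x) ⁻¹' cyl w := by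
    ext x
    simp only [mem_preimage, cyl, mem_setOf_eq, Pi.add_apply, ← h]
    exact ⟨fun hx i hi => (z2 _ _ _).mpr (hx i hi), fun hx i hi => (z2 _ _ _).mp (hx i hi)⟩
  rw [key, measure_preimage_add]

lemma fairCoin_cyl (w : List (ZMod 2)) : fairCoin (cyl w) = (2 : ENNReal)⁻¹ ^ w.length := by
  set n := w.length with hn
  have hpart : (1 : ENNReal) = ∑' t : Fin n → ZMod 2, fairCoin (cyl (List.ofFn t)) := by
    rw [← measure_iUnion (fun t t' htt' => cyl_ofFn_disjoint htt') (fun t => measurableSet_cyl _),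
      iUnion_cyl_ofFn, fairCoin_univ]
  have heach : ∀ t : Fin n → ZMod 2, fairCoin (cyl (List.ofFn t)) = fairCoin (cyl w) :=
    fun t => fairCoin_cyl_eq (by simp [hn])
  rw [tsum_congr heach, tsum_fintype, Finset.sum_const, Finset.card_univ] at hpart
  have hcard : Fintype.card (Fin n → ZMod 2) = 2 ^ n := by
    simp [Fintype.card_fun]
  rw [hcard, nsmul_eq_mul] at hpart
  have hmul : (2 : ENNReal) ^ n * fairCoin (cyl w) = 1 := by
    rw [show ((2:ENNReal)^n) = ((2^n : ℕ) : ENNReal) by norm_cast, ← hpart]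
  have := ENNReal.eq_inv_of_mul_eq_one_left (a := fairCoin (cyl w)) (b := (2:ENNReal)^n) ?_
  · rw [this, ← ENNReal.inv_pow]
  · rw [mul_comm]; exact hmul

theorem exists_fairCoin : ∃ m : Measure CS, IsFairCoin m :=
  ⟨fairCoin, inferInstance, fairCoin_cyl⟩


lemma prefix_getD {u v : List (ZMod 2)} (h : u <+: v) {i : ℕ} (hi : i < u.length) :
    v.getD i 0 = u.getD i 0 := by
  obtain ⟨t, rfl⟩ := h
  rw [List.getD_append _ _ _ _ hi]

lemma branch_sub (P : Set CS) {u : List (ZMod 2)} (hu : Branch P u) (b : ZMod 2) :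
    (cyl (u ++ [b]) ∩ P).Nonempty := by
  rcases zmod2_cases b with rfl | rfl
  exacts [hu.1, hu.2]

/-- Every nonempty relatively clopen piece of a perfect set admits a branching extension. -/
lemma exists_branch_ext {P : Set CS} (hP : Perfect P) {w : List (ZMod 2)}
    (hw : (cyl w ∩ P).Nonempty) : ∃ u, w <+: u ∧ Branch P u := by
  obtain ⟨x, hxw, hxP⟩ := hw
  set n := w.length with hn
  have hacc := hP.acc x hxP
  rw [accPt_iff_nhds] at hacc
  obtain ⟨y, ⟨hyO, hyP⟩, hyx⟩ := hacc (cyl (List.ofFn fun i : Fin n => x i))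
    ((isOpen_cyl _).mem_nhds (by
      intro i hi
      simp only [List.length_ofFn] at hi
      rw [List.getD_eq_getElem _ _ (by simp [hi]), List.getElem_ofFn]))
  have hyxn : ∀ i, i < n → y i = x i := by
    intro i hi
    have := hyO i (by simpa using hi)
    rwa [List.getD_eq_getElem _ _ (by simp [hi]), List.getElem_ofFn] at this
  have hne : ∃ k, y k ≠ x k := by
    by_contra h
    push_neg at h
    exact hyx (funext h)
  set k := Nat.find hne with hk
  have hkspec : y k ≠ x k := Nat.find_spec hne
  have hkmin : ∀ j, j < k → y j = x j := fun j hj => by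
    have := Nat.find_min hne hj
    simpa using this
  have hnk : n ≤ k := by
    by_contra h
    push_neg at h
    exact hkspec (hyxn k h)
  -- u := w ++ [x n, x (n+1), ..., x (k-1)]
  refine ⟨w ++ List.ofFn (fun i : Fin (k - n) => x (n + i)), ⟨_, rfl⟩, ?_⟩
  set u := w ++ List.ofFn (fun i : Fin (k - n) => x (n + i)) with hu
  have hulen : u.length = k := by simp [hu, Nat.add_sub_cancel' hnk]; omega
  have hxu : x ∈ cyl u := by
    intro i hi
    rw [hulen] at hi
    rcases lt_or_ge i n with h | h
    · rw [hu, List.getD_append _ _ _ _ (by omega)]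
      exact hxw i (by omega)
    · rw [hu, List.getD_append_right _ _ _ _ (by omega)]
      rw [List.getD_eq_getElem _ _ (by simp; omega), List.getElem_ofFn]
      simp only
      congr 1
      omega
  have hyu : y ∈ cyl u := by
    intro i hi
    rw [hulen] at hi
    rw [hkmin i hi]
    exact hxu i (by rw [hulen]; exact hi)
  have hxmem : x ∈ cyl (u ++ [x k]) ∩ P := by
    refine ⟨mem_cyl_append.mpr ⟨hxu, by rw [hulen]⟩, hxP⟩
  have hymem : y ∈ cyl (u ++ [y k]) ∩ P := by
    refine ⟨mem_cyl_append.mpr ⟨hyu, by rw [hulen]⟩, hyP⟩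
  constructor
  · rcases zmod2_cases (x k) with h0 | h1
    · exact ⟨x, by rwa [← h0]⟩
    · rcases zmod2_cases (y k) with h0' | h1'
      · exact ⟨y, by rwa [← h0']⟩
      · exact absurd (h1'.trans h1.symm) hkspec
  · rcases zmod2_cases (x k) with h0 | h1
    · rcases zmod2_cases (y k) with h0' | h1'
      · exact absurd (h0'.trans h0.symm) hkspec
      · exact ⟨y, by rwa [← h1']⟩
    · exact ⟨x, by rwa [← h1]⟩

open Classical in
/-- A branching node of minimal length extending `w`. -/
noncomputable def nextNode (P : Set CS) (w : List (ZMod 2)) : List (ZMod 2) :=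
  if h : ∃ n, ∃ u, (w <+: u ∧ Branch P u) ∧ u.length = n then
    (Nat.find_spec h).choose
  else w

open Classical in
lemma nextNode_spec {P : Set CS} (hP : Perfect P) {w : List (ZMod 2)}
    (hw : (cyl w ∩ P).Nonempty) :
    w <+: nextNode P w ∧ Branch P (nextNode P w) ∧
      ∀ v, w <+: v → Branch P v → (nextNode P w).length ≤ v.length := by
  obtain ⟨u0, hu0⟩ := exists_branch_ext hP hw
  have h : ∃ n, ∃ u, (w <+: u ∧ Branch P u) ∧ u.length = n := ⟨u0.length, u0, hu0, rfl⟩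
  rw [nextNode]
  rw [dif_pos h]
  obtain ⟨⟨h1, h2⟩, h3⟩ := (Nat.find_spec h).choose_spec
  refine ⟨h1, h2, fun v hv hbv => ?_⟩
  rw [h3]
  exact Nat.find_min' h ⟨v, ⟨hv, hbv⟩, rfl⟩

noncomputable def nodeC (P : Set CS) (s : CS) : ℕ → List (ZMod 2)
  | 0 => nextNode P []
  | n + 1 => nextNode P (nodeC P s n ++ [s n])

/-- Bundled invariant for the node chain. -/
lemma nodeC_inv {P : Set CS} (hP : PerfSet P) (s : CS) (n : ℕ) :
    Branch P (nodeC P s n) ∧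
      (nodeC P s n ++ [s n]) <+: nodeC P s (n + 1) ∧
      (∀ v, (nodeC P s n ++ [s n]) <+: v → Branch P v → (nodeC P s (n + 1)).length ≤ v.length) := by
  induction n with
  | zero =>
    have h0 : (cyl ([] : List (ZMod 2)) ∩ P).Nonempty := by rw [cyl_nil, univ_inter]; exact hP.2
    have s0 := nextNode_spec hP.1 h0
    have hb : Branch P (nodeC P s 0) := s0.2.1
    have h1 : (cyl (nodeC P s 0 ++ [s 0]) ∩ P).Nonempty := branch_sub P hb (s 0)
    have s1 := nextNode_spec hP.1 h1
    exact ⟨hb, s1.1, s1.2.2⟩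
  | succ n ih =>
    have hb : Branch P (nodeC P s (n + 1)) := by
      have h1 : (cyl (nodeC P s n ++ [s n]) ∩ P).Nonempty := branch_sub P ih.1 (s n)
      exact (nextNode_spec hP.1 h1).2.1
    have h2 : (cyl (nodeC P s (n + 1) ++ [s (n + 1)]) ∩ P).Nonempty := branch_sub P hb (s (n + 1))
    have s2 := nextNode_spec hP.1 h2
    exact ⟨hb, s2.1, s2.2.2⟩

lemma nodeC_branch {P : Set CS} (hP : PerfSet P) (s : CS) (n : ℕ) : Branch P (nodeC P s n) :=
  (nodeC_inv hP s n).1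

lemma nodeC_succ_prefix {P : Set CS} (hP : PerfSet P) (s : CS) (n : ℕ) :
    (nodeC P s n ++ [s n]) <+: nodeC P s (n + 1) :=
  (nodeC_inv hP s n).2.1

lemma nodeC_min {P : Set CS} (hP : PerfSet P) (s : CS) (n : ℕ) :
    ∀ v, (nodeC P s n ++ [s n]) <+: v → Branch P v → (nodeC P s (n + 1)).length ≤ v.length :=
  (nodeC_inv hP s n).2.2

lemma nodeC_zero_min {P : Set CS} (hP : PerfSet P) (s : CS) :
    ∀ v, Branch P v → (nodeC P s 0).length ≤ v.length := by
  have h0 : (cyl ([] : List (ZMod 2)) ∩ P).Nonempty := by rw [cyl_nil, univ_inter]; exact hP.2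
  exact fun v hv => (nextNode_spec hP.1 h0).2.2 v (List.nil_prefix) hv

lemma nodeC_len {P : Set CS} (hP : PerfSet P) (s : CS) (n : ℕ) :
    n ≤ (nodeC P s n).length := by
  induction n with
  | zero => exact Nat.zero_le _
  | succ n ih =>
    have := (nodeC_succ_prefix hP s n).length_le
    simp only [List.length_append, List.length_singleton] at this
    omega

lemma nodeC_chain {P : Set CS} (hP : PerfSet P) (s : CS) {m n : ℕ} (h : m ≤ n) :
    (nodeC P s m ++ [s m]) <+: nodeC P s (n + 1) := by
  induction n with
  | zero =>
    rw [Nat.le_zero] at h; subst h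
    exact nodeC_succ_prefix hP s 0
  | succ n ih =>
    rcases Nat.lt_or_ge m (n + 1) with h' | h'
    · exact (ih (by omega)).trans
        ((List.prefix_append _ _).trans (nodeC_succ_prefix hP s (n + 1)))
    · have : m = n + 1 := by omega
      subst this
      exact nodeC_succ_prefix hP s (n + 1)

lemma nodeC_prefix_big {P : Set CS} (hP : PerfSet P) (s : CS) {k n : ℕ} (h : k ≤ n + 1) :
    nodeC P s k <+: nodeC P s (n + 1) := by
  rcases Nat.lt_or_ge k (n + 1) with h' | h'
  · cases k with
    | zero => exact (List.prefix_append _ _).trans (nodeC_chain hP s (Nat.zero_le n))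
    | succ m => exact (List.prefix_append _ _).trans (nodeC_chain hP s (by omega))
  · have : k = n + 1 := by omega
    subst this
    exact List.prefix_refl _

noncomputable def fP (P : Set CS) (s : CS) : CS := fun i => (nodeC P s (i + 1)).getD i 0

lemma fP_mem_cyl {P : Set CS} (hP : PerfSet P) (s : CS) (n : ℕ) :
    fP P s ∈ cyl (nodeC P s n ++ [s n]) := by
  intro i hi
  set N := max n i with hN
  have h1 : (nodeC P s n ++ [s n]) <+: nodeC P s (N + 1) := nodeC_chain hP s (le_max_left n i)
  have h2 : nodeC P s (i + 1) <+: nodeC P s (N + 1) := nodeC_prefix_big hP s (by omega)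
  have hilen : i < (nodeC P s (i + 1)).length := lt_of_lt_of_le (by omega) (nodeC_len hP s (i + 1))
  show (nodeC P s (i + 1)).getD i 0 = _
  rw [← prefix_getD h2 hilen, prefix_getD h1 hi]

lemma nodeC_congr {P : Set CS} {s t : CS} {n : ℕ} (h : ∀ i, i < n → s i = t i) :
    nodeC P s n = nodeC P t n := by
  induction n with
  | zero => rfl
  | succ n ih =>
    show nextNode P (nodeC P s n ++ [s n]) = nextNode P (nodeC P t n ++ [t n])
    rw [ih (fun i hi => h i (by omega)), h n (by omega)]

lemma continuous_fP (P : Set CS) : Continuous (fP P) := by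
  apply continuous_pi
  intro i
  apply IsLocallyConstant.continuous
  rw [IsLocallyConstant.iff_exists_open]
  intro s
  refine ⟨cyl (List.ofFn fun j : Fin (i + 1) => s j), isOpen_cyl _, ?_, ?_⟩
  · intro j hj
    simp only [List.length_ofFn] at hj
    rw [List.getD_eq_getElem _ _ (by simp [hj]), List.getElem_ofFn]
  · intro t ht
    show (nodeC P t (i + 1)).getD i 0 = (nodeC P s (i + 1)).getD i 0
    have : nodeC P t (i + 1) = nodeC P s (i + 1) := by
      apply nodeC_congr
      intro j hj
      have := ht j (by simpa using hj)
      rw [List.getD_eq_getElem _ _ (by simp [hj]), List.getElem_ofFn] at this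
      exact this
    rw [this]

lemma getD_append_last (u : List (ZMod 2)) (b : ZMod 2) :
    (u ++ [b]).getD u.length 0 = b := by
  rw [List.getD_append_right _ _ _ _ le_rfl, Nat.sub_self]
  rfl

lemma fP_at_node {P : Set CS} (hP : PerfSet P) (s : CS) (n : ℕ) :
    fP P s ((nodeC P s n).length) = s n := by
  have h := fP_mem_cyl hP s n ((nodeC P s n).length) (by simp)
  rwa [getD_append_last] at h

lemma fP_injective {P : Set CS} (hP : PerfSet P) : Function.Injective (fP P) := by
  intro s t hst
  by_contra hne
  have hex : ∃ k, s k ≠ t k := by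
    by_contra h
    push_neg at h
    exact hne (funext h)
  set n := Nat.find hex with hn
  have hmin : ∀ i, i < n → s i = t i := fun i hi => by
    have := Nat.find_min hex hi; simpa using this
  have hnode : nodeC P s n = nodeC P t n := nodeC_congr hmin
  have h1 := fP_at_node hP s n
  have h2 := fP_at_node hP t n
  rw [hst] at h1
  rw [← hnode] at h2
  exact Nat.find_spec hex (h1.symm.trans h2)

lemma fP_mem_P {P : Set CS} (hP : PerfSet P) (s : CS) : fP P s ∈ P := by
  -- fP P s is the limit of points pn ∈ cyl (nodeC n ++ [s n]) ∩ P
  have hne : ∀ n, (cyl (nodeC P s n ++ [s n]) ∩ P).Nonempty :=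
    fun n => branch_sub P (nodeC_branch hP s n) (s n)
  choose p hp using hne
  have htend : Filter.Tendsto p Filter.atTop (nhds (fP P s)) := by
    rw [tendsto_pi_nhds]
    intro i
    apply tendsto_nhds_of_eventually_eq
    filter_upwards [Filter.eventually_ge_atTop (i + 1)] with n hni
    have hi : i < (nodeC P s n ++ [s n]).length := by
      have := nodeC_len hP s n
      simp only [List.length_append, List.length_singleton]
      omega
    rw [(hp n).1 i hi, ← fP_mem_cyl hP s n i hi]
  exact hP.1.closed.mem_of_tendsto htend (Filter.Eventually.of_forall fun n => (hp n).2)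

lemma list_eq_of_cyl {x : CS} {u v : List (ZMod 2)} (hlen : u.length = v.length)
    (h1 : x ∈ cyl u) (h2 : x ∈ cyl v) : u = v := by
  apply List.ext_getElem hlen
  intro i hi1 hi2
  rw [← List.getD_eq_getElem u 0 hi1, ← List.getD_eq_getElem v 0 hi2,
    ← h1 i hi1, ← h2 i hi2]

lemma cyl_prefix {x : CS} {u v : List (ZMod 2)} (hxu : x ∈ cyl u) (hxv : x ∈ cyl v)
    (h : v.length ≤ u.length) : v <+: u := by
  have htake : x ∈ cyl (u.take v.length) := by
    intro i hi
    rw [List.length_take] at hi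
    have hiv : i < v.length := lt_of_lt_of_le hi (min_le_left _ _)
    have hiu : i < u.length := lt_of_lt_of_le hiv h
    rw [List.getD_eq_getElem _ _ (by rw [List.length_take]; omega), List.getElem_take]
    rw [← List.getD_eq_getElem u 0 hiu]
    exact hxu i hiu
  have : v = u.take v.length :=
    list_eq_of_cyl (by rw [List.length_take]; omega) hxv htake
  rw [this]
  exact List.take_prefix _ _

lemma nodeC_len_lt {P : Set CS} (hP : PerfSet P) (s : CS) :
    StrictMono (fun n => (nodeC P s n).length) := by
  apply strictMono_nat_of_lt_succ
  intro n
  have := (nodeC_succ_prefix hP s n).length_le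
  simp only [List.length_append, List.length_singleton] at this
  omega

lemma branch_prefix_classify {P : Set CS} (hP : PerfSet P) {s : CS} {u : List (ZMod 2)}
    (hu : Branch P u) (hfu : fP P s ∈ cyl u) : ∃ n, nodeC P s n = u := by
  have hex : ∃ k, u.length < (nodeC P s (k + 1)).length :=
    ⟨u.length, lt_of_lt_of_le (by omega) (nodeC_len hP s (u.length + 1))⟩
  set n := Nat.find hex with hn
  have hlt : u.length < (nodeC P s (n + 1)).length := Nat.find_spec hex
  have hge : (nodeC P s n).length ≤ u.length := by
    cases hn' : n with
    | zero => exact hn' ▸ nodeC_zero_min hP s u hu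
    | succ m =>
      have := Nat.find_min hex (by omega : m < n)
      omega
  have hfn : fP P s ∈ cyl (nodeC P s n) :=
    cyl_anti (List.prefix_append _ _) (fP_mem_cyl hP s n)
  rcases eq_or_lt_of_le hge with heq | hlt2
  · exact ⟨n, list_eq_of_cyl heq hfn hfu⟩
  · exfalso
    have hwn : (nodeC P s n ++ [s n]) <+: u := by
      apply cyl_prefix hfu (fP_mem_cyl hP s n)
      simp only [List.length_append, List.length_singleton]
      omega
    have := nodeC_min hP s n u hwn hu
    omega

lemma fP_preimage_cyl {P : Set CS} (hP : PerfSet P) {u : List (ZMod 2)}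
    (hu : Branch P u) (b : ZMod 2) :
    fP P ⁻¹' cyl (u ++ [b]) = ⋃ n, {s | nodeC P s n = u ∧ s n = b} := by
  ext s
  simp only [mem_preimage, mem_iUnion, mem_setOf_eq]
  constructor
  · intro h
    have hfu : fP P s ∈ cyl u := cyl_anti (List.prefix_append _ _) h
    obtain ⟨n, hn⟩ := branch_prefix_classify hP hu hfu
    refine ⟨n, hn, ?_⟩
    have h1 : fP P s (u.length) = b := (mem_cyl_append.mp h).2
    have h2 := fP_at_node hP s n
    rw [hn] at h2
    rw [← h1, ← h2]
  · rintro ⟨n, rfl, rfl⟩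
    exact fP_mem_cyl hP s n


/-- Extension of a finite word to an infinite sequence by zeros. -/
def extW {n : ℕ} (t : Fin n → ZMod 2) : CS := fun i => if h : i < n then t ⟨i, h⟩ else 0

open Classical in
lemma slice_eq_biUnion {P : Set CS} (u : List (ZMod 2)) (n : ℕ) (b : ZMod 2) :
    {s : CS | nodeC P s n = u ∧ s n = b} =
      ⋃ t ∈ Finset.univ.filter (fun t : Fin n → ZMod 2 => nodeC P (extW t) n = u),
        cyl (List.ofFn t ++ [b]) := by
  ext s
  simp only [mem_setOf_eq, mem_iUnion, Finset.mem_filter, Finset.mem_univ, true_and,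
    exists_prop]
  constructor
  · rintro ⟨h1, h2⟩
    refine ⟨fun i => s i, ?_, ?_⟩
    · rw [show nodeC P (extW fun i : Fin n => s i) n = nodeC P s n from
        nodeC_congr (fun i hi => by simp [extW, hi]), h1]
    · rw [mem_cyl_append]
      constructor
      · exact mem_cyl_ofFn.mpr fun i => rfl
      · rwa [List.length_ofFn]
  · rintro ⟨t, ht, hs⟩
    rw [mem_cyl_append, List.length_ofFn] at hs
    have hagree : ∀ i, i < n → s i = extW t i := by
      intro i hi
      rw [mem_cyl_ofFn.mp hs.1 ⟨i, hi⟩]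
      simp [extW, hi]
    exact ⟨by rw [nodeC_congr hagree, ht], hs.2⟩

open Classical in
lemma measure_slice {P : Set CS} (hP : PerfSet P) {m : Measure CS} (hm : IsFairCoin m)
    (u : List (ZMod 2)) (n : ℕ) (b : ZMod 2) :
    m {s : CS | nodeC P s n = u ∧ s n = b} =
      (Finset.univ.filter (fun t : Fin n → ZMod 2 => nodeC P (extW t) n = u)).card *
        (2 : ENNReal)⁻¹ ^ (n + 1) := by
  rw [slice_eq_biUnion]
  rw [measure_biUnion_finset ?disj (fun t _ => measurableSet_cyl _)]
  · have hval : ∀ t ∈ Finset.univ.filter (fun t : Fin n → ZMod 2 => nodeC P (extW t) n = u),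
        m (cyl (List.ofFn t ++ [b])) = (2 : ENNReal)⁻¹ ^ (n + 1) := by
      intro t _
      rw [hm.2 (List.ofFn t ++ [b])]
      simp
    rw [Finset.sum_congr rfl hval, Finset.sum_const, nsmul_eq_mul]
  case disj =>
    intro t _ t' _ htt'
    exact Disjoint.mono (cyl_anti (List.prefix_append _ _)) (cyl_anti (List.prefix_append _ _))
      (cyl_ofFn_disjoint htt')

lemma measurable_fP (P : Set CS) : Measurable (fP P) := (continuous_fP P).measurable

open Classical in
lemma map_fP_canonical {P : Set CS} (hP : PerfSet P) {m : Measure CS} (hm : IsFairCoin m) :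
    IsCanonical P (Measure.map (fP P) m) := by
  haveI := hm.1
  have hmeas := measurable_fP P
  refine ⟨Measure.isProbabilityMeasure_map hmeas.aemeasurable, ?_, ?_⟩
  · rw [Measure.map_apply hmeas hP.1.closed.measurableSet]
    have hpre : fP P ⁻¹' P = univ := eq_univ_of_forall fun s => fP_mem_P hP s
    rw [hpre]
    exact measure_univ
  · intro u hu
    rw [Measure.map_apply hmeas (measurableSet_cyl _),
      Measure.map_apply hmeas (measurableSet_cyl _),
      fP_preimage_cyl hP hu 0, fP_preimage_cyl hP hu 1]
    have hdisj : ∀ b : ZMod 2, Pairwise (Function.onFun Disjoint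
        (fun n => {s : CS | nodeC P s n = u ∧ s n = b})) := by
      intro b n n' hnn'
      rw [Function.onFun, Set.disjoint_left]
      rintro s ⟨h1, _⟩ ⟨h2, _⟩
      exact hnn' ((nodeC_len_lt hP s).injective
        (show (nodeC P s n).length = (nodeC P s n').length by rw [h1, h2]))
    have hmeasb : ∀ (b : ZMod 2) (n : ℕ),
        MeasurableSet {s : CS | nodeC P s n = u ∧ s n = b} := by
      intro b n
      rw [slice_eq_biUnion]
      exact Finset.measurableSet_biUnion _ fun t _ => measurableSet_cyl _
    rw [measure_iUnion (hdisj 0) (hmeasb 0), measure_iUnion (hdisj 1) (hmeasb 1)]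
    exact tsum_congr fun n => by
      rw [measure_slice hP hm u n 0, measure_slice hP hm u n 1]


lemma cyl_children_disjoint (w : List (ZMod 2)) :
    Disjoint (cyl (w ++ [0])) (cyl (w ++ [1])) := by
  rw [Set.disjoint_left]
  intro x h0 h1
  have e0 := (mem_cyl_append.mp h0).2
  have e1 := (mem_cyl_append.mp h1).2
  rw [e0] at e1
  exact absurd e1 (by decide)

lemma measure_cyl_sum (ν : Measure CS) (w : List (ZMod 2)) :
    ν (cyl w) = ν (cyl (w ++ [0])) + ν (cyl (w ++ [1])) := by
  rw [cyl_eq_union w, measure_union (cyl_children_disjoint w) (measurableSet_cyl _)]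

lemma canonical_compl {P : Set CS} (hP : PerfSet P) {ν : Measure CS}
    (hν : IsCanonical P ν) : ν Pᶜ = 0 := by
  haveI := hν.1
  rw [measure_compl hP.1.closed.measurableSet (measure_ne_top ν P), hν.2.1, measure_univ,
    tsub_self]

lemma canonical_zero {P : Set CS} (hP : PerfSet P) {ν : Measure CS}
    (hν : IsCanonical P ν) {v : List (ZMod 2)} (h : cyl v ∩ P = ∅) : ν (cyl v) = 0 := by
  have hsub : cyl v ⊆ Pᶜ := by
    intro x hx hxP
    have : x ∈ cyl v ∩ P := ⟨hx, hxP⟩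
    rw [h] at this
    exact this
  exact le_antisymm ((measure_mono hsub).trans (canonical_compl hP hν).le) zero_le

lemma canonical_cyl_eq {P : Set CS} (hP : PerfSet P) {ν₁ ν₂ : Measure CS}
    (h1 : IsCanonical P ν₁) (h2 : IsCanonical P ν₂) (w : List (ZMod 2)) :
    ν₁ (cyl w) = ν₂ (cyl w) := by
  haveI := h1.1; haveI := h2.1
  induction w using List.reverseRecOn with
  | nil => rw [cyl_nil, measure_univ, measure_univ]
  | append_singleton w b ih =>
    by_cases hbr : Branch P w
    · have key : ∀ ν : Measure CS, IsCanonical P ν →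
          2 * ν (cyl (w ++ [b])) = ν (cyl w) := by
        intro ν hν
        rcases zmod2_cases b with rfl | rfl
        · rw [two_mul, measure_cyl_sum ν w, hν.2.2 w hbr]
        · rw [two_mul, measure_cyl_sum ν w, hν.2.2 w hbr]
      have e1 := key ν₁ h1
      have e2 := key ν₂ h2
      rw [ih] at e1
      rw [← e2] at e1
      exact (ENNReal.mul_right_inj (by norm_num) (by norm_num)).mp e1
    · rcases zmod2_cases b with rfl | rfl
      · by_cases hem : cyl (w ++ [0]) ∩ P = ∅
        · rw [canonical_zero hP h1 hem, canonical_zero hP h2 hem]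
        · have hother : cyl (w ++ [1]) ∩ P = ∅ := by
            by_contra hne
            exact hbr ⟨nonempty_iff_ne_empty.mpr hem, nonempty_iff_ne_empty.mpr hne⟩
          have key : ∀ ν : Measure CS, IsCanonical P ν →
              ν (cyl (w ++ [0])) = ν (cyl w) := by
            intro ν hν
            rw [measure_cyl_sum ν w, canonical_zero hP hν hother, add_zero]
          rw [key ν₁ h1, key ν₂ h2, ih]
      · by_cases hem : cyl (w ++ [1]) ∩ P = ∅
        · rw [canonical_zero hP h1 hem, canonical_zero hP h2 hem]
        · have hother : cyl (w ++ [0]) ∩ P = ∅ := by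
            by_contra hne
            exact hbr ⟨nonempty_iff_ne_empty.mpr hne, nonempty_iff_ne_empty.mpr hem⟩
          have key : ∀ ν : Measure CS, IsCanonical P ν →
              ν (cyl (w ++ [1])) = ν (cyl w) := by
            intro ν hν
            rw [measure_cyl_sum ν w, canonical_zero hP hν hother, zero_add]
          rw [key ν₁ h1, key ν₂ h2, ih]

lemma eval_preimage_eq (i : ℕ) (c : ZMod 2) :
    {x : CS | x i = c} =
      ⋃ t : {t : Fin (i + 1) → ZMod 2 // t ⟨i, Nat.lt_succ_self i⟩ = c},
        cyl (List.ofFn t.1) := by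
  ext x
  simp only [mem_setOf_eq, mem_iUnion]
  constructor
  · intro h
    exact ⟨⟨fun j => x j, h⟩, mem_cyl_ofFn.mpr fun j => rfl⟩
  · rintro ⟨⟨t, ht⟩, hx⟩
    rw [mem_cyl_ofFn] at hx
    exact (hx ⟨i, Nat.lt_succ_self i⟩).trans ht

lemma mcs_eq_generateFrom : (inferInstance : MeasurableSpace CS) =
    MeasurableSpace.generateFrom {S | ∃ w, S = cyl w} := by
  apply le_antisymm
  · have heval : ∀ i : ℕ,
        @Measurable _ _ (MeasurableSpace.generateFrom {S | ∃ w, S = cyl w}) _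
          (fun x : CS => x i) := by
      intro i
      refine @measurable_to_countable' (ZMod 2) CS _ _
        (MeasurableSpace.generateFrom {S | ∃ w, S = cyl w}) _ ?_
      intro c
      rw [show (fun x : CS => x i) ⁻¹' {c} = {x : CS | x i = c} from rfl, eval_preimage_eq]
      exact MeasurableSet.iUnion fun t => MeasurableSpace.measurableSet_generateFrom ⟨_, rfl⟩
    refine iSup_le fun i => measurable_iff_comap_le.mp (heval i)
  · exact MeasurableSpace.generateFrom_le (by rintro S ⟨w, rfl⟩; exact measurableSet_cyl w)

lemma isPiSystem_cyl : IsPiSystem {S : Set CS | ∃ w, S = cyl w} := by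
  rintro S ⟨v, rfl⟩ T ⟨w, rfl⟩ hne
  wlog h : w.length ≤ v.length generalizing v w
  · rw [inter_comm] at hne ⊢
    obtain ⟨u, hu⟩ := this w v hne (le_of_not_ge h)
    exact ⟨u, by rw [← hu]⟩
  obtain ⟨x, hxv, hxw⟩ := hne
  refine ⟨v, ?_⟩
  apply subset_antisymm inter_subset_left
  intro y hy
  refine ⟨hy, fun i hi => ?_⟩
  rw [hy i (lt_of_lt_of_le hi h), ← hxv i (lt_of_lt_of_le hi h), hxw i hi]

lemma canonical_unique {P : Set CS} (hP : PerfSet P) {ν₁ ν₂ : Measure CS}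
    (h1 : IsCanonical P ν₁) (h2 : IsCanonical P ν₂) : ν₁ = ν₂ := by
  haveI := h1.1; haveI := h2.1
  refine ext_of_generate_finite _ mcs_eq_generateFrom isPiSystem_cyl ?_ ?_
  · rintro S ⟨w, rfl⟩
    exact canonical_cyl_eq hP h1 h2 w
  · rw [measure_univ, measure_univ]


lemma cs_add_self (y : CS) : y + y = 0 := by
  funext i
  show y i + y i = 0
  have : ∀ a : ZMod 2, a + a = 0 := by decide
  exact this (y i)

lemma image_add_eq_preimage (G : Set CS) (t : CS) :
    (fun g => g + t) '' G = {z : CS | z + t ∈ G} := by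
  ext z
  simp only [mem_image, mem_setOf_eq]
  constructor
  · rintro ⟨g, hg, rfl⟩
    rwa [add_assoc, cs_add_self, add_zero]
  · intro h
    exact ⟨z + t, h, by rw [add_assoc, cs_add_self, add_zero]⟩


/-- If `X` is perfectly null in the transitive sense and `Y` is an `SR^N`
set, then `X + Y` is perfectly null. -/
theorem stmt_19 (X Y : Set CS) (hX : PNPrime X)
    (hY : ∀ m : Measure CS, IsFairCoin m → SRN m Y) :
    PerfectlyNull (X + Y) := by
  intro P hP ν hν
  obtain ⟨m, hm⟩ := exists_fairCoin
  haveI := hm.1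
  obtain ⟨G, hGδ, hXG, hGt⟩ := hX P hP
  set ν' := Measure.map (fP P) m with hν'
  have hcanon : IsCanonical P ν' := map_fP_canonical hP hm
  have hνeq : ν = ν' := canonical_unique hP hν hcanon
  have hGmeas : MeasurableSet G := hGδ.measurableSet
  have hmeasfP := measurable_fP P
  set S : CS → Set CS := fun y => {z | z + y ∈ G} ∩ P with hS
  have hSmeas : ∀ y, MeasurableSet (S y) := fun y =>
    (((continuous_id.add continuous_const).measurable) hGmeas).inter
      hP.1.closed.measurableSet
  have hSnull : ∀ y, ν' (S y) = 0 := by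
    intro y
    have := hGt y ν' hcanon
    rwa [image_add_eq_preimage G y] at this
  set H : Set (CS × CS) := {p | fP P p.2 + p.1 ∈ G ∧ fP P p.2 ∈ P} with hH
  have hHmeas : MeasurableSet H := by
    have h1 : Measurable (fun p : CS × CS => fP P p.2 + p.1) :=
      (((continuous_fP P).comp continuous_snd).add continuous_fst).measurable
    exact (h1 hGmeas).inter ((hmeasfP.comp measurable_snd) hP.1.closed.measurableSet)
  have hsec : ∀ y : CS, m {s | (y, s) ∈ H} = 0 := by
    intro y
    have hpre : {s | (y, s) ∈ H} = fP P ⁻¹' (S y) := rfl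
    rw [hpre, ← Measure.map_apply hmeasfP (hSmeas y)]
    exact hSnull y
  have hun := hY m hm H hHmeas hsec
  have hunion : (⋃ y ∈ Y, {s | (y, s) ∈ H}) = fP P ⁻¹' (⋃ y ∈ Y, S y) := by
    ext s
    simp only [mem_iUnion, mem_setOf_eq, mem_preimage, hH, hS, mem_inter_iff]
  rw [hunion] at hun
  obtain ⟨N, hNsub, hNmeas, hNzero⟩ := exists_measurable_superset_of_null hun
  have hemb : MeasurableEmbedding (fP P) :=
    ((continuous_fP P).isClosedEmbedding (fP_injective hP)).measurableEmbedding
  have hsub : (X + Y) ∩ P ⊆ (fP P '' N) ∪ (Set.range (fP P))ᶜ := by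
    rintro z ⟨hzXY, hzP⟩
    by_cases hr : z ∈ Set.range (fP P)
    · obtain ⟨s, rfl⟩ := hr
      left
      refine ⟨s, hNsub ?_, rfl⟩
      rw [mem_preimage]
      rw [Set.mem_add] at hzXY
      obtain ⟨x, hx, y, hy, hxy⟩ := hzXY
      refine mem_biUnion hy ⟨?_, hzP⟩
      show fP P s + y ∈ G
      rw [← hxy, add_assoc, cs_add_self, add_zero]
      exact hXG hx
    · right; exact hr
  rw [hνeq]
  refine le_antisymm (le_trans (measure_mono hsub) (le_trans (measure_union_le _ _) ?_))
    zero_le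
  have h1 : ν' (fP P '' N) = 0 := by
    rw [hν', Measure.map_apply hmeasfP (hemb.measurableSet_image' hNmeas),
      Set.preimage_image_eq _ (fP_injective hP)]
    exact hNzero
  have h2 : ν' (Set.range (fP P))ᶜ = 0 := by
    haveI := hcanon.1
    rw [measure_compl hemb.measurableSet_range (measure_ne_top _ _), measure_univ,
      hν', Measure.map_apply hmeasfP hemb.measurableSet_range, Set.preimage_range,
      measure_univ, tsub_self]
  rw [h1, h2, add_zero]
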